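/- Let A_k = {e_1, −e_1, …, e_k, −e_k} ⊆ ℝ^d where e_1,…,e_d is the standard basis and 1 ≤ k ≤ d. Then dim lpos A_k = k, but for every a ∈ A_k, dim lpos(A_k \ {a}) < k. -/

import Mathlib

open scoped RealInnerProductSpace

/-- The conical hull (set of nonnegative combinations) of a set `V` in `ℝ^d`. -/
def posHull {d : ℕ} (V : Set (EuclideanSpace ℝ (Fin d))) : Set (EuclideanSpace ℝ (Fin d)) :=
  {x | ∃ (s : Finset (EuclideanSpace ℝ (Fin d))) (c : EuclideanSpace ℝ (Fin d) → ℝ),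
    ↑s ⊆ V ∧ (∀ v ∈ s, 0 ≤ c v) ∧ x = ∑ v ∈ s, c v • v}

/-- The lineality set `pos A ∩ (− pos A)` of the conical hull of `A`. -/
def linealitySet {d : ℕ} (A : Set (EuclideanSpace ℝ (Fin d))) : Set (EuclideanSpace ℝ (Fin d)) :=
  posHull A ∩ (-posHull A)

lemma mem_posHull_self {d : ℕ} {V : Set (EuclideanSpace ℝ (Fin d))} {v : EuclideanSpace ℝ (Fin d)}
    (hv : v ∈ V) : v ∈ posHull V := by
  refine ⟨{v}, fun _ => 1, by simpa using hv, fun _ _ => zero_le_one, by simp⟩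

lemma posHull_subset_span {d : ℕ} (V : Set (EuclideanSpace ℝ (Fin d))) :
    posHull V ⊆ (Submodule.span ℝ V : Set (EuclideanSpace ℝ (Fin d))) := by
  rintro x ⟨s, c, hs, _, rfl⟩
  exact Submodule.sum_mem _ fun v hv =>
    Submodule.smul_mem _ _ (Submodule.subset_span (hs hv))

lemma posHull_nonpos {d : ℕ} {V : Set (EuclideanSpace ℝ (Fin d))}
    {f : EuclideanSpace ℝ (Fin d) →ₗ[ℝ] ℝ} (h : ∀ v ∈ V, f v ≤ 0)
    {x : EuclideanSpace ℝ (Fin d)} (hx : x ∈ posHull V) : f x ≤ 0 := by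
  obtain ⟨s, c, hs, hc, rfl⟩ := hx
  rw [map_sum]
  refine Finset.sum_nonpos fun v hv => ?_
  rw [map_smul, smul_eq_mul]
  exact mul_nonpos_of_nonneg_of_nonpos (hc v hv) (h v (hs hv))

lemma linealitySet_subset_ker {d : ℕ} {V : Set (EuclideanSpace ℝ (Fin d))}
    {f : EuclideanSpace ℝ (Fin d) →ₗ[ℝ] ℝ} (h : ∀ v ∈ V, f v ≤ 0) :
    linealitySet V ⊆ (LinearMap.ker f : Set (EuclideanSpace ℝ (Fin d))) := by
  rintro x ⟨hx, hx'⟩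
  have h1 : f x ≤ 0 := posHull_nonpos h hx
  have h2 : f (-x) ≤ 0 := posHull_nonpos h (Set.mem_neg.mp hx')
  rw [map_neg] at h2
  simp only [SetLike.mem_coe, LinearMap.mem_ker]
  linarith

/-- Example: `A_k = {±e₁, …, ±e_k}` has `dim lpos A_k = k`, but removing any element
drops the dimension of the lineality space below `k`. -/
theorem plus_minus_basis_example (d k : ℕ) (hk1 : 1 ≤ k) (hkd : k ≤ d) :
    Module.finrank ℝ (Submodule.span ℝ (linealitySet
        {x : EuclideanSpace ℝ (Fin d) | ∃ i : Fin d, (i : ℕ) < k ∧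
          (x = EuclideanSpace.single i (1 : ℝ) ∨ x = -EuclideanSpace.single i (1 : ℝ))})) = k ∧
      ∀ a ∈ {x : EuclideanSpace ℝ (Fin d) | ∃ i : Fin d, (i : ℕ) < k ∧
          (x = EuclideanSpace.single i (1 : ℝ) ∨ x = -EuclideanSpace.single i (1 : ℝ))},
        Module.finrank ℝ (Submodule.span ℝ (linealitySet
          ({x : EuclideanSpace ℝ (Fin d) | ∃ i : Fin d, (i : ℕ) < k ∧
            (x = EuclideanSpace.single i (1 : ℝ) ∨ x = -EuclideanSpace.single i (1 : ℝ))}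
              \ {a}))) < k := by
  set e : Fin d → EuclideanSpace ℝ (Fin d) := fun i => EuclideanSpace.single i (1 : ℝ) with he
  set S : Set (EuclideanSpace ℝ (Fin d)) :=
    {x : EuclideanSpace ℝ (Fin d) | ∃ i : Fin d, (i : ℕ) < k ∧ (x = e i ∨ x = -e i)} with hS
  set t : Set (Fin d) := {i : Fin d | (i : ℕ) < k} with ht
  set V : Submodule ℝ (EuclideanSpace ℝ (Fin d)) := Submodule.span ℝ (e '' t) with hV
  -- basic membership facts
  have heS : ∀ i : Fin d, (i : ℕ) < k → e i ∈ S := fun i hi => ⟨i, hi, Or.inl rfl⟩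
  have hneS : ∀ i : Fin d, (i : ℕ) < k → -e i ∈ S := fun i hi => ⟨i, hi, Or.inr rfl⟩
  have hSV : S ⊆ (V : Set (EuclideanSpace ℝ (Fin d))) := by
    rintro x ⟨i, hi, hx | hx⟩
    · exact hx ▸ Submodule.subset_span ⟨i, hi, rfl⟩
    · exact hx ▸ Submodule.neg_mem _ (Submodule.subset_span ⟨i, hi, rfl⟩)
  -- finrank V = k
  have hg : Set.range (fun i : Fin k => e (Fin.castLE hkd i)) = e '' t := by
    ext x
    constructor
    · rintro ⟨i, rfl⟩
      exact ⟨Fin.castLE hkd i, i.isLt, rfl⟩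
    · rintro ⟨i, hi, rfl⟩
      exact ⟨⟨(i : ℕ), hi⟩, by congr 1⟩
  have hli : LinearIndependent ℝ (fun i : Fin k => e (Fin.castLE hkd i)) := by
    have h0 := (EuclideanSpace.basisFun (Fin d) ℝ).toBasis.linearIndependent.comp
      (Fin.castLE hkd) (Fin.castLE_injective hkd)
    convert h0 using 1
    funext i
    simp [he, Function.comp, OrthonormalBasis.coe_toBasis, EuclideanSpace.basisFun_apply]
    all_goals rfl
  have hVrank : Module.finrank ℝ V = k := by
    rw [hV, ← hg, finrank_span_eq_card hli, Fintype.card_fin]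
  constructor
  · -- span of lineality set of S equals V
    have h1 : Submodule.span ℝ (linealitySet S) ≤ V := by
      rw [Submodule.span_le]
      exact fun x hx =>
        (Submodule.span_le.mpr hSV) (posHull_subset_span S hx.1)
    have h2 : V ≤ Submodule.span ℝ (linealitySet S) := by
      rw [hV, Submodule.span_le]
      rintro x ⟨i, hi, rfl⟩
      refine Submodule.subset_span ⟨mem_posHull_self (heS i hi), ?_⟩
      exact Set.mem_neg.mpr (mem_posHull_self (hneS i hi))
    rw [le_antisymm h1 h2, hVrank]
  · -- removing any element drops the rank
    rintro a ⟨j, hj, ha⟩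
    have key : ∀ f : EuclideanSpace ℝ (Fin d) →ₗ[ℝ] ℝ, (∀ v ∈ S \ {a}, f v ≤ 0) →
        f (e j) ≠ 0 →
        Module.finrank ℝ (Submodule.span ℝ (linealitySet (S \ {a}))) < k := by
      intro f hfa hfej
      set W : Submodule ℝ (EuclideanSpace ℝ (Fin d)) := LinearMap.ker f ⊓ V with hW
      have hlin : Submodule.span ℝ (linealitySet (S \ {a})) ≤ W := by
        rw [Submodule.span_le]
        intro x hx
        refine ⟨linealitySet_subset_ker hfa hx, ?_⟩
        exact (Submodule.span_le.mpr fun y hy => hSV hy.1) (posHull_subset_span _ hx.1)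
      have hWV : W < V := by
        refine lt_of_le_of_ne inf_le_right fun hcon => ?_
        have : e j ∈ W := by
          rw [hcon, hV]
          exact Submodule.subset_span ⟨j, hj, rfl⟩
        exact hfej this.1
      calc Module.finrank ℝ (Submodule.span ℝ (linealitySet (S \ {a})))
          ≤ Module.finrank ℝ W := Submodule.finrank_mono hlin
        _ < Module.finrank ℝ V := Submodule.finrank_lt_finrank_of_lt hWV
        _ = k := hVrank
    have hejj : e j j = 1 := by simp [he, EuclideanSpace.single_apply]
    have hsingle : ∀ i : Fin d, e i j = if j = i then 1 else 0 := fun i => by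
      simp [he, EuclideanSpace.single_apply]
    rcases ha with ha | ha
    · refine key (EuclideanSpace.projₗ j) ?_ ?_
      · rintro v ⟨⟨i, hi, hv | hv⟩, hva⟩
        · have hij : j ≠ i := by
            rintro rfl
            exact hva (Set.mem_singleton_iff.mpr (hv.trans ha.symm))
          show v j ≤ 0
          rw [hv, hsingle, if_neg hij]
        · show v j ≤ 0
          have : v j = -(e i j) := by rw [hv]; rfl
          rw [this, hsingle]
          by_cases hij : j = i <;> simp [hij]
      · show e j j ≠ 0
        rw [hejj]; exact one_ne_zero
    · refine key (-EuclideanSpace.projₗ j) ?_ ?_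
      · rintro v ⟨⟨i, hi, hv | hv⟩, hva⟩
        · show -(v j) ≤ 0
          rw [hv, hsingle]
          by_cases hij : j = i <;> simp [hij]
        · have hij : j ≠ i := by
            rintro rfl
            exact hva (Set.mem_singleton_iff.mpr (hv.trans (by rw [ha])))
          show -(v j) ≤ 0
          have : v j = -(e i j) := by rw [hv]; rfl
          rw [this, hsingle, if_neg hij]
          simp
      · show -(e j j) ≠ 0
        rw [hejj]
        norm_num
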